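/- Let d ≥ 1, let μ_j (j ∈ Fin d) be probability measures on ℝ, let μ := ⊗_j μ_j be their product measure on (Fin d → ℝ), and let f : (Fin d → ℝ) → ℝ be bounded and measurable. For u ⊆ Fin d define F_u(x) := ∫ f(x_u : z_{−u}) dμ(z) and f_u := Σ_{v ⊆ u} (−1)^{|u|−|v|} F_v. Fix x ∈ (Fin d → ℝ) and define the value function val_x(u) := F_u(x) − F_∅(x), which satisfies val_x(∅) = 0. Then for every j ∈ Fin d, the Shapley value of j for val_x equals φ_j(val_x) = Σ_{u ⊆ Fin d, j ∈ u} f_u(x) / |u|. -/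

import Mathlib

open MeasureTheory Finset

/-- Partial dependence function: `F_u(x) = ∫ f(x_u : z_{-u}) dμ(z)`, where the hybrid
point `(x_u : z_{-u})` takes coordinate `x j` for `j ∈ u` and `z j` otherwise. -/
noncomputable def partialDep {d : ℕ} (μ : Fin d → Measure ℝ)
    (f : (Fin d → ℝ) → ℝ) (u : Finset (Fin d)) (x : Fin d → ℝ) : ℝ :=
  ∫ z, f (fun j => if j ∈ u then x j else z j) ∂(Measure.pi μ)

/-- PDD component: `f_u = Σ_{v ⊆ u} (-1)^(|u|-|v|) F_v`. -/
noncomputable def pddComp {d : ℕ} (μ : Fin d → Measure ℝ)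
    (f : (Fin d → ℝ) → ℝ) (u : Finset (Fin d)) (x : Fin d → ℝ) : ℝ :=
  ∑ v ∈ u.powerset, (-1 : ℝ) ^ (u.card - v.card) * partialDep μ f v x


/-- The Shapley value of player `j` for the value function `val`. -/
noncomputable def shapley {d : ℕ} (val : Finset (Fin d) → ℝ) (j : Fin d) : ℝ :=
  (1 / (d : ℝ)) * ∑ u ∈ (Finset.univ.erase j).powerset,
    ((Nat.choose (d - 1) u.card : ℝ))⁻¹ * (val (insert j u) - val u)


lemma beta_sum (n m : ℕ) :
    ∑ i ∈ Finset.range (n+1), (-1:ℝ)^i * (n.choose i) / ((m:ℝ)+1+i) =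
      ((m.factorial : ℝ) * n.factorial) / ((m+n+1).factorial) := by
  induction n generalizing m with
  | zero =>
    have : (m.factorial : ℝ) ≠ 0 := by positivity
    simp [Nat.factorial]
    field_simp
  | succ n ih =>
    have e2 : ∑ i ∈ Finset.range (n+1), (-1:ℝ)^(i+1) * (n.choose (i+1):ℝ) / ((m:ℝ)+1+(i+1))
        = (∑ i ∈ Finset.range (n+1), (-1:ℝ)^i * (n.choose i :ℝ)/((m:ℝ)+1+i)) - 1/((m:ℝ)+1) := by
      have h := Finset.sum_range_succ' (fun k => (-1:ℝ)^k * (n.choose k:ℝ) / ((m:ℝ)+1+k)) (n+1)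
      rw [Finset.sum_range_succ] at h
      simp only [Nat.choose_succ_self, Nat.cast_zero, Nat.cast_ofNat, Nat.cast_succ,
        Nat.choose_zero_right, Nat.cast_one, pow_zero, one_mul, add_zero, Nat.cast_add] at h
      push_cast at h ⊢
      simp only [mul_zero, zero_mul, zero_div, add_zero, zero_add] at h
      rw [h]
      ring
    have step : ∑ i ∈ Finset.range (n+2), (-1:ℝ)^i * ((n+1).choose i : ℕ) / ((m:ℝ)+1+i)
        = (∑ i ∈ Finset.range (n+1), (-1:ℝ)^i * (n.choose i) / ((m:ℝ)+1+i))
          - ∑ i ∈ Finset.range (n+1), (-1:ℝ)^i * (n.choose i) / (((m:ℝ)+1)+1+i) := by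
      rw [Finset.sum_range_succ' (fun k => (-1:ℝ)^k * ((n+1).choose k : ℕ) / ((m:ℝ)+1+k)) (n+1)]
      have e1 : ∑ i ∈ Finset.range (n+1),
            (-1:ℝ)^(i+1) * (((n+1).choose (i+1) : ℕ):ℝ) / ((m:ℝ)+1+((i:ℕ)+1:ℕ))
          = ∑ i ∈ Finset.range (n+1), ((-((-1:ℝ)^i * (n.choose i) / (((m:ℝ)+1)+1+i)))
            + ((-1:ℝ)^(i+1) * (n.choose (i+1):ℝ) / ((m:ℝ)+1+(i+1)))) := by
        refine Finset.sum_congr rfl fun i _ => ?_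
        rw [Nat.choose_succ_succ]
        have hpos : ((m:ℝ)+1+((i:ℝ)+1)) ≠ 0 := by positivity
        push_cast
        rw [show ((m:ℝ)+1+1+i) = ((m:ℝ)+1+((i:ℝ)+1)) by ring]
        field_simp
        ring
      rw [e1, Finset.sum_add_distrib, Finset.sum_neg_distrib, e2]
      simp only [Nat.choose_zero_right]
      push_cast
      ring
    rw [step, ih m]
    have ihm1 := ih (m+1)
    push_cast at ihm1
    rw [ihm1]
    have h1 : ((m+n+1).factorial : ℝ) ≠ 0 := by positivity
    have h2 : ((m+1+n+1).factorial : ℝ) ≠ 0 := by positivity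
    rw [show (m + (n+1) + 1) = ((m + 1 + n + 1)) by ring]
    rw [show (m+1+n+1) = ((m+n+1)+1) by ring, Nat.factorial_succ (m+n+1),
      Nat.factorial_succ n, Nat.factorial_succ m]
    push_cast
    have h3 : ((m:ℝ)+n+1+1) ≠ 0 := by positivity
    field_simp
    ring

lemma coeff_sum {d : ℕ} (hd : 1 ≤ d) (j : Fin d) (t : Finset (Fin d))
    (ht : t ⊆ Finset.univ.erase j) :
    ∑ w ∈ (Finset.univ.erase j).powerset.filter (fun w => t ⊆ w),
      (-1:ℝ)^(w.card - t.card) / ((w.card : ℝ) + 1)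
    = (1/(d:ℝ)) * ((Nat.choose (d-1) t.card : ℝ))⁻¹ := by
  classical
  set E := Finset.univ.erase j with hE
  have hEcard : E.card = d - 1 := by
    rw [hE, card_erase_of_mem (mem_univ j), card_univ, Fintype.card_fin]
  -- bijection w ↦ w \ t
  have hbij : ∑ w ∈ E.powerset.filter (fun w => t ⊆ w),
        (-1:ℝ)^(w.card - t.card) / ((w.card : ℝ) + 1)
      = ∑ s ∈ (E \ t).powerset, (-1:ℝ)^(s.card) / (((t.card : ℝ) + s.card) + 1) := by
    refine Finset.sum_nbij' (fun w => w \ t) (fun s => s ∪ t) ?_ ?_ ?_ ?_ ?_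
    · intro w hw
      simp only [mem_filter, mem_powerset] at hw
      exact mem_powerset.2 (sdiff_subset_sdiff hw.1 le_rfl)
    · intro s hs
      simp only [mem_powerset] at hs
      refine mem_filter.2 ⟨mem_powerset.2 (union_subset ((hs.trans sdiff_subset)) ht),
        subset_union_right⟩
    · intro w hw
      simp only [mem_filter, mem_powerset] at hw
      exact sdiff_union_of_subset hw.2
    · intro s hs
      simp only [mem_powerset] at hs
      have hdisj : Disjoint s t := Finset.sdiff_disjoint.mono_left hs
      show (s ∪ t) \ t = s
      rw [union_sdiff_right, Finset.sdiff_eq_self_iff_disjoint.2 hdisj]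
    · intro w hw
      simp only [mem_filter, mem_powerset] at hw
      have h1 : (w \ t).card = w.card - t.card := card_sdiff_of_subset hw.2
      have h2 : t.card ≤ w.card := card_le_card hw.2
      rw [h1]
      congr 1
      push_cast [Nat.cast_sub h2]
      ring
  rw [hbij, Finset.sum_powerset]
  have hcard : (E \ t).card = d - 1 - t.card := by rw [card_sdiff_of_subset ht, hEcard]
  have hsum : ∀ i ∈ Finset.range ((E \ t).card + 1),
      ∑ s ∈ Finset.powersetCard i (E \ t), (-1:ℝ)^(s.card) / (((t.card : ℝ) + s.card) + 1)
      = ((d-1-t.card).choose i : ℝ) * ((-1:ℝ)^i / (((t.card : ℝ) + i) + 1)) := by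
    intro i _
    rw [Finset.sum_powersetCard i (E \ t) (fun k => (-1:ℝ)^k / (((t.card : ℝ) + k) + 1))]
    rw [hcard, nsmul_eq_mul]
  rw [Finset.sum_congr rfl hsum, hcard]
  have hform : ∀ i ∈ Finset.range (d - 1 - t.card + 1),
      ((d-1-t.card).choose i : ℝ) * ((-1:ℝ)^i / (((t.card : ℝ) + i) + 1))
      = (-1:ℝ)^i * ((d-1-t.card).choose i : ℝ) / ((t.card:ℝ)+1+i) := by
    intro i _
    rw [show ((t.card:ℝ)+i)+1 = (t.card:ℝ)+1+i by ring]
    ring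
  rw [Finset.sum_congr rfl hform, beta_sum (d-1-t.card) t.card]
  -- now factorial arithmetic
  have hm : t.card ≤ d - 1 := hEcard ▸ card_le_card ht
  have hmn : t.card + (d - 1 - t.card) + 1 = d := by omega
  rw [hmn]
  have key := Nat.choose_mul_factorial_mul_factorial hm
  have keyR : ((d-1).choose t.card : ℝ) * (t.card.factorial : ℝ) * ((d-1-t.card).factorial : ℝ)
      = ((d-1).factorial : ℝ) := by exact_mod_cast key
  have hdfac : (d.factorial : ℝ) = (d : ℝ) * ((d-1).factorial : ℝ) := by
    have : d.factorial = d * (d-1).factorial := by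
      conv_lhs => rw [show d = (d-1)+1 by omega]
      rw [Nat.factorial_succ]
      congr 1
      omega
    exact_mod_cast this
  have hC : ((d-1).choose t.card : ℝ) ≠ 0 := Nat.cast_ne_zero.2 (Nat.choose_pos hm).ne'
  have hdR : (d:ℝ) ≠ 0 := Nat.cast_ne_zero.2 (by omega)
  have hf1 : (d.factorial : ℝ) ≠ 0 := by positivity
  rw [hdfac]
  field_simp
  linear_combination keyR

theorem shapley_pdd {d : ℕ} (hd : 1 ≤ d)
    (μ : Fin d → Measure ℝ) [∀ i, IsProbabilityMeasure (μ i)]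
    (f : (Fin d → ℝ) → ℝ) (hf : Measurable f) (C : ℝ) (hC : ∀ x, |f x| ≤ C)
    (x : Fin d → ℝ) (j : Fin d) :
    shapley (fun u => partialDep μ f u x - partialDep μ f ∅ x) j =
      ∑ u ∈ Finset.univ.powerset.filter (fun u : Finset (Fin d) => j ∈ u),
        pddComp μ f u x / u.card := by
  classical
  set G : Finset (Fin d) → ℝ := fun u => partialDep μ f u x with hG
  set E := Finset.univ.erase j with hE
  have hjE : j ∉ E := notMem_erase j _
  -- Step A: reindex RHS over powerset of E
  have hA : ∑ u ∈ Finset.univ.powerset.filter (fun u : Finset (Fin d) => j ∈ u),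
        pddComp μ f u x / u.card
      = ∑ w ∈ E.powerset, pddComp μ f (insert j w) x / ((insert j w).card : ℕ) := by
    refine (Finset.sum_nbij' (fun u => u.erase j) (fun w => insert j w) ?_ ?_ ?_ ?_ ?_).symm.symm
    · intro u hu
      simp only [mem_filter, mem_powerset] at hu
      exact mem_powerset.2 (fun a ha => mem_erase.2 ⟨(mem_erase.1 ha).1, mem_univ a⟩)
    · intro w hw
      simp only [mem_powerset] at hw
      refine mem_filter.2 ⟨mem_powerset.2 (subset_univ _), mem_insert_self j w⟩
    · intro u hu
      simp only [mem_filter] at hu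
      exact insert_erase hu.2
    · intro w hw
      simp only [mem_powerset] at hw
      exact erase_insert (fun hjw => hjE (hw hjw))
    · intro u hu
      simp only [mem_filter] at hu
      rw [insert_erase hu.2]
  rw [hA]
  -- Step B: expand pddComp of insert j w
  have hB : ∀ w ∈ E.powerset,
      pddComp μ f (insert j w) x / ((insert j w).card : ℕ)
      = ∑ t ∈ w.powerset,
          (-1:ℝ)^(w.card - t.card) * (G (insert j t) - G t) / ((w.card : ℝ) + 1) := by
    intro w hw
    have hjw : j ∉ w := fun h => hjE ((mem_powerset.1 hw) h)
    have hcard : (insert j w).card = w.card + 1 := card_insert_of_notMem hjw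
    rw [pddComp, Finset.sum_powerset_insert hjw, hcard]
    have h1 : ∀ t ∈ w.powerset,
        (-1:ℝ)^(w.card + 1 - t.card) * G t = -((-1:ℝ)^(w.card - t.card) * G t) := by
      intro t ht
      have : w.card + 1 - t.card = (w.card - t.card) + 1 := by
        have := card_le_card (mem_powerset.1 ht); omega
      rw [this, pow_succ]
      ring
    have h2 : ∀ t ∈ w.powerset,
        (-1:ℝ)^(w.card + 1 - (insert j t).card) * G (insert j t)
        = (-1:ℝ)^(w.card - t.card) * G (insert j t) := by
      intro t ht
      have hjt : j ∉ t := fun h => hjw ((mem_powerset.1 ht) h)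
      rw [card_insert_of_notMem hjt]
      congr 2
      omega
    rw [Finset.sum_congr rfl h1, Finset.sum_congr rfl h2]
    push_cast
    rw [← Finset.sum_add_distrib, Finset.sum_div]
    refine Finset.sum_congr rfl fun t ht => ?_
    ring
  rw [Finset.sum_congr rfl hB]
  -- Step C: replace inner index set and swap
  have hpow : ∀ w ∈ E.powerset, ∑ t ∈ w.powerset,
        (-1:ℝ)^(w.card - t.card) * (G (insert j t) - G t) / ((w.card : ℝ) + 1)
      = ∑ t ∈ E.powerset.filter (fun t => t ⊆ w),
        (-1:ℝ)^(w.card - t.card) * (G (insert j t) - G t) / ((w.card : ℝ) + 1) := by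
    intro w hw
    congr 1
    ext s
    simp only [mem_powerset, mem_filter]
    exact ⟨fun h => ⟨h.trans (mem_powerset.1 hw), h⟩, fun h => h.2⟩
  rw [Finset.sum_congr rfl hpow]
  rw [show (∑ w ∈ E.powerset, ∑ t ∈ E.powerset.filter (fun t => t ⊆ w),
        (-1:ℝ)^(w.card - t.card) * (G (insert j t) - G t) / ((w.card : ℝ) + 1))
      = ∑ t ∈ E.powerset, ∑ w ∈ E.powerset.filter (fun w => t ⊆ w),
        (-1:ℝ)^(w.card - t.card) * (G (insert j t) - G t) / ((w.card : ℝ) + 1) by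
    simp_rw [Finset.sum_filter]
    exact Finset.sum_comm]
  -- Step D: inner sum is coeff * (G insert - G t)
  have hD : ∀ t ∈ E.powerset,
      ∑ w ∈ E.powerset.filter (fun w => t ⊆ w),
        (-1:ℝ)^(w.card - t.card) * (G (insert j t) - G t) / ((w.card : ℝ) + 1)
      = (1/(d:ℝ)) * ((Nat.choose (d-1) t.card : ℝ))⁻¹ * (G (insert j t) - G t) := by
    intro t ht
    rw [← coeff_sum hd j t (mem_powerset.1 ht), Finset.sum_mul]
    refine Finset.sum_congr rfl fun w hw => ?_
    ring
  rw [Finset.sum_congr rfl hD]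
  -- LHS
  rw [shapley, Finset.mul_sum]
  refine Finset.sum_congr rfl fun t ht => ?_
  simp only [hG]
  ring
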